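/- arXiv:1410.2841 — 2 statements merged into one kernel-verified Lean document; each statement's English description precedes it below -/
import Mathlib

section
/- Let X₀,...,X_N, Y₁,...,Y_N be d×d real symmetric matrices. The complex block Toeplitz matrix Toeplitz(X₀, X₁+iY₁, ..., X_N+iY_N) is positive semidefinite if and only if the real matrix Toeplitz(X₀, X₁, ..., X_N) + Hankel(−Y_N, −Y_{N−1}, ..., −Y₁, 0, Y₁, ..., Y_{N−1}, Y_N) is positive semidefinite. -/
open Matrix ComplexOrder

/-- Block Toeplitz matrix with blocks `T 0, T 1, ..., T N` (conjugate-transposed below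
the block diagonal). -/
def blockToeplitz (d N : ℕ) {R : Type*} [CommRing R] [StarRing R]
    (T : ℕ → Matrix (Fin d) (Fin d) R) :
    Matrix (Fin (N + 1) × Fin d) (Fin (N + 1) × Fin d) R :=
  fun p q =>
    if p.1.1 ≤ q.1.1 then T (q.1.1 - p.1.1) p.2 q.2 else (T (p.1.1 - q.1.1))ᴴ p.2 q.2

/-- Block Hankel matrix with blocks `s 1, ..., s (2N+1)`: block `(j,k)` (1-indexed) is
`s (j+k-1)`. -/
def blockHankel (d N : ℕ) {R : Type*} [CommRing R]
    (s : ℕ → Matrix (Fin d) (Fin d) R) :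
    Matrix (Fin (N + 1) × Fin d) (Fin (N + 1) × Fin d) R :=
  fun p q => s (p.1.1 + q.1.1 + 1) p.2 q.2

lemma psd_smul_iff {n : Type*} [Fintype n] {c : ℂ} (hc : 0 < c) (A : Matrix n n ℂ) :
    (c • A).PosSemidef ↔ A.PosSemidef := by
  have hcre : 0 < c.re ∧ c.im = 0 := by
    rw [Complex.lt_def] at hc
    exact ⟨by simpa using hc.1, by simpa using hc.2.symm⟩
  have hc0 : c ≠ 0 := by
    intro h; rw [h] at hc; exact lt_irrefl _ hc
  have hstar : star c = c := by
    apply Complex.ext <;> simp [hcre.2]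
  constructor
  · rintro ⟨h1, h2⟩
    refine posSemidef_iff_dotProduct_mulVec.mpr ⟨?_, ?_⟩
    · have : (c • A)ᴴ = c • A := h1
      rw [conjTranspose_smul, hstar] at this
      exact smul_right_injective _ hc0 this
    · intro x
      have h := (posSemidef_iff_dotProduct_mulVec.mp ⟨h1, h2⟩).2 x
      rw [smul_mulVec, dotProduct_smul] at h
      rw [Complex.le_def] at h ⊢
      simp only [Complex.zero_re, Complex.zero_im, smul_eq_mul, Complex.mul_re,
        Complex.mul_im, hcre.2] at h ⊢
      constructor
      · nlinarith [h.1, hcre.1]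
      · nlinarith [h.2, hcre.1]
  · rintro ⟨h1, h2⟩
    refine posSemidef_iff_dotProduct_mulVec.mpr ⟨?_, fun x => ?_⟩
    · show (c • A)ᴴ = c • A
      rw [conjTranspose_smul, hstar, h1]
    · have h := (posSemidef_iff_dotProduct_mulVec.mp ⟨h1, h2⟩).2 x
      rw [smul_mulVec, dotProduct_smul]
      exact smul_nonneg hc.le h

lemma psd_map_complex_iff {n : Type*} [Fintype n] [DecidableEq n] (M : Matrix n n ℝ) :
    (M.map (fun a => (a : ℂ))).PosSemidef ↔ M.PosSemidef := by
  constructor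
  · rintro ⟨h1, h2⟩
    refine posSemidef_iff_dotProduct_mulVec.mpr ⟨?_, ?_⟩
    · ext i j
      have := congrFun (congrFun h1 i) j
      simp only [conjTranspose_apply, map_apply, transpose_apply] at this ⊢
      have h3 : ((M j i : ℝ) : ℂ) = ((M i j : ℝ) : ℂ) := by
        simpa [Complex.conj_ofReal] using this
      exact_mod_cast h3
    · intro x
      have h := (posSemidef_iff_dotProduct_mulVec.mp ⟨h1, h2⟩).2 (fun i => (x i : ℂ))
      have he : star (fun i => (x i : ℂ)) ⬝ᵥ (M.map (fun a => (a:ℂ))) *ᵥ (fun i => (x i : ℂ))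
          = ((star x ⬝ᵥ M *ᵥ x : ℝ) : ℂ) := by
        simp only [dotProduct, mulVec, Pi.star_apply, map_apply]
        push_cast
        simp [Complex.conj_ofReal, Finset.mul_sum]
      rw [he] at h
      exact_mod_cast h
  · intro h
    obtain ⟨m, B, rfl⟩ : ∃ (m : ℕ) (B : Matrix (Fin m) n ℝ), M = Bᴴ * B := by
      obtain ⟨m, v, hv⟩ := Matrix.posSemidef_iff_eq_sum_vecMulVec.mp h
      exact ⟨m, Matrix.of fun i j => v i j, by
        rw [hv]; ext a b; simp [mul_apply, vecMulVec_apply, Matrix.sum_apply, mul_comm]⟩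
    have : (Bᴴ * B).map (fun a => (a:ℂ)) = (B.map (fun a => (a:ℂ)))ᴴ * (B.map (fun a => (a:ℂ))) := by
      have h1 : (Bᴴ * B).map ⇑Complex.ofRealHom = Bᴴ.map ⇑Complex.ofRealHom * B.map ⇑Complex.ofRealHom :=
        Matrix.map_mul
      have h2 : Bᴴ.map (fun a : ℝ => (a:ℂ)) = (B.map (fun a : ℝ => (a:ℂ)))ᴴ := by
        ext i j
        simp [Complex.conj_ofReal]
      calc (Bᴴ * B).map (fun a => (a:ℂ)) = Bᴴ.map (fun a : ℝ => (a:ℂ)) * B.map (fun a : ℝ => (a:ℂ)) := h1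
        _ = _ := by rw [h2]
    rw [this]
    exact Matrix.posSemidef_conjTranspose_mul_self _

def flipE (N d : ℕ) : (Fin (N+1) × Fin d) ≃ (Fin (N+1) × Fin d) :=
  Fin.revPerm.prodCongr (Equiv.refl _)

lemma flipE_apply (N d : ℕ) (p : Fin (N+1) × Fin d) : flipE N d p = (p.1.rev, p.2) := rfl

lemma flipE_symm (N d : ℕ) : (flipE N d).symm = flipE N d := by
  ext p
  · simp [flipE, Fin.revPerm]
  · simp [flipE]

def Jmat (N d : ℕ) : Matrix (Fin (N+1) × Fin d) (Fin (N+1) × Fin d) ℂ :=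
  (1 : Matrix _ _ ℂ).submatrix (flipE N d) id

lemma Jmat_mul (N d : ℕ) (A : Matrix (Fin (N+1) × Fin d) (Fin (N+1) × Fin d) ℂ) :
    Jmat N d * A = A.submatrix (flipE N d) id := by
  have := Matrix.one_submatrix_mul (α := ℂ) (⇑(flipE N d)) (Equiv.refl _) A
  simpa [Jmat] using this

lemma mul_Jmat (N d : ℕ) (A : Matrix (Fin (N+1) × Fin d) (Fin (N+1) × Fin d) ℂ) :
    A * Jmat N d = A.submatrix id (flipE N d) := by
  have := Matrix.mul_submatrix_one (α := ℂ) (flipE N d) (id : _ → _) A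
  rw [Jmat, this, flipE_symm]
  rfl

lemma Jmat_sq (N d : ℕ) : Jmat N d * Jmat N d = 1 := by
  rw [Jmat_mul, Jmat, submatrix_submatrix]
  have : ⇑(flipE N d) ∘ ⇑(flipE N d) = id := by
    funext p
    simp [flipE_apply, Fin.rev_rev]
  rw [this]
  simp

lemma Jmat_herm (N d : ℕ) : (Jmat N d)ᴴ = Jmat N d := by
  ext p q
  simp only [Jmat, conjTranspose_apply, submatrix_apply, id_eq, one_apply]
  by_cases h : flipE N d q = p
  · have h2 : flipE N d p = q := by rw [← h]; simp [flipE_apply, Fin.rev_rev]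
    simp [h, h2]
  · have h2 : ¬ flipE N d p = q := by
      intro hc; apply h; rw [← hc]; simp [flipE_apply, Fin.rev_rev]
    simp [h, h2]

lemma hexp (N d : ℕ) (A : Matrix (Fin (N+1) × Fin d) (Fin (N+1) × Fin d) ℂ) :
    (1 - Complex.I • Jmat N d) * A * (1 + Complex.I • Jmat N d) =
      A + Complex.I • A.submatrix id (flipE N d) - Complex.I • A.submatrix (flipE N d) id
        + A.submatrix (flipE N d) (flipE N d) := by
  simp only [sub_mul, mul_add, add_mul, mul_sub, one_mul, mul_one, smul_mul_assoc,
    mul_smul_comm, smul_smul, Complex.I_mul_I, neg_smul, one_smul, neg_one_smul,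
    Matrix.mul_assoc, Jmat_mul, mul_Jmat, submatrix_submatrix, Function.comp_id,
    Function.id_comp]
  simp only [smul_sub, smul_smul, Complex.I_mul_I, neg_smul, one_smul, sub_neg_eq_add]
  abel

lemma key (d N : ℕ) (X Y : ℕ → Matrix (Fin d) (Fin d) ℝ)
    (hX : ∀ n, (X n).IsSymm) (hY : ∀ n, (Y n).IsSymm) (hY0 : Y 0 = 0) :
    (1 - Complex.I • Jmat N d) *
      (blockToeplitz d N (fun n =>
        (X n).map (fun a => (a : ℂ)) + Complex.I • (Y n).map (fun a => (a : ℂ)))) *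
      (1 + Complex.I • Jmat N d) =
    (2:ℂ) • ((blockToeplitz d N X + blockHankel d N (fun m =>
        if h : 1 ≤ m ∧ m ≤ N then -(Y (N + 1 - m))
        else if h2 : N + 1 ≤ m ∧ m ≤ 2 * N + 1 then Y (m - (N + 1))
        else 0)).map (fun a => (a : ℂ))) := by
  rw [hexp]
  ext ⟨⟨j, hj⟩, a⟩ ⟨⟨k, hk⟩, b⟩
  have hx : ∀ m, X m b a = X m a b := fun m => (hX m).apply a b
  have hy : ∀ m, Y m b a = Y m a b := fun m => (hY m).apply a b
  simp only [Matrix.add_apply, Matrix.sub_apply, Matrix.smul_apply, submatrix_apply, id_eq, smul_eq_mul,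
    map_apply, flipE_apply, blockToeplitz, blockHankel, conjTranspose_apply, Matrix.add_apply,
    Fin.val_rev, star_add, star_smul, _root_.map_mul, Complex.star_def, Complex.conj_ofReal,
    Complex.conj_I, star_trivial, hx, hy]
  rcases Nat.lt_trichotomy j k with hjk | hjk | hjk
  · rcases Nat.lt_trichotomy (j + k) N with hN | hN | hN
    · -- j<k, j+k<N
      simp only [if_pos (show j ≤ k by omega), if_pos (show j ≤ N+1-(k+1) by omega),
        if_neg (show ¬(N+1-(j+1) ≤ k) by omega),
        if_neg (show ¬(N+1-(j+1) ≤ N+1-(k+1)) by omega),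
        dif_pos (show 1 ≤ j+k+1 ∧ j+k+1 ≤ N by omega),
        show N+1-(k+1)-j = N-(j+k) by omega, show N+1-(j+1)-k = N-(j+k) by omega,
        show N+1-(j+1)-(N+1-(k+1)) = k-j by omega, show N+1-(j+k+1) = N-(j+k) by omega,
        Matrix.neg_apply]
      push_cast
      ring_nf
      try simp only [Complex.I_sq, ite_self]
      try ring_nf
    · -- j<k, j+k=N
      simp only [if_pos (show j ≤ k by omega), if_pos (show j ≤ N+1-(k+1) by omega),
        if_pos (show N+1-(j+1) ≤ k by omega),
        if_neg (show ¬(N+1-(j+1) ≤ N+1-(k+1)) by omega),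
        dif_neg (show ¬(1 ≤ j+k+1 ∧ j+k+1 ≤ N) by omega),
        dif_pos (show N+1 ≤ j+k+1 ∧ j+k+1 ≤ 2*N+1 by omega),
        show N+1-(k+1)-j = 0 by omega, show k-(N+1-(j+1)) = 0 by omega,
        show N+1-(j+1)-(N+1-(k+1)) = k-j by omega, show j+k+1-(N+1) = 0 by omega,
        hY0, Matrix.zero_apply]
      push_cast
      ring_nf
      try simp only [Complex.I_sq, ite_self]
      try ring_nf
    · -- j<k, j+k>N
      simp only [if_pos (show j ≤ k by omega), if_neg (show ¬(j ≤ N+1-(k+1)) by omega),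
        if_pos (show N+1-(j+1) ≤ k by omega),
        if_neg (show ¬(N+1-(j+1) ≤ N+1-(k+1)) by omega),
        dif_neg (show ¬(1 ≤ j+k+1 ∧ j+k+1 ≤ N) by omega),
        dif_pos (show N+1 ≤ j+k+1 ∧ j+k+1 ≤ 2*N+1 by omega),
        show j-(N+1-(k+1)) = j+k-N by omega, show k-(N+1-(j+1)) = j+k-N by omega,
        show N+1-(j+1)-(N+1-(k+1)) = k-j by omega, show j+k+1-(N+1) = j+k-N by omega]
      push_cast
      ring_nf
      try simp only [Complex.I_sq, ite_self]
      try ring_nf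
  · subst hjk
    rcases Nat.lt_trichotomy (j + j) N with hN | hN | hN
    · -- j=k, 2j<N
      simp only [if_pos (show j ≤ j by omega), if_pos (show j ≤ N+1-(j+1) by omega),
        if_neg (show ¬(N+1-(j+1) ≤ j) by omega),
        dif_pos (show 1 ≤ j+j+1 ∧ j+j+1 ≤ N by omega),
        show N+1-(j+1)-j = N-(j+j) by omega,
        show N+1-(j+1)-(N+1-(j+1)) = 0 by omega, show N+1-(j+j+1) = N-(j+j) by omega,
        Nat.sub_self, hY0, Matrix.zero_apply, Matrix.neg_apply]
      push_cast
      ring_nf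
      try simp only [Complex.I_sq, ite_self]
      try ring_nf
    · -- j=k, 2j=N
      simp only [if_pos (show j ≤ j by omega), if_pos (show j ≤ N+1-(j+1) by omega),
        if_pos (show N+1-(j+1) ≤ j by omega),
        dif_neg (show ¬(1 ≤ j+j+1 ∧ j+j+1 ≤ N) by omega),
        dif_pos (show N+1 ≤ j+j+1 ∧ j+j+1 ≤ 2*N+1 by omega),
        show N+1-(j+1)-j = 0 by omega, show j-(N+1-(j+1)) = 0 by omega,
        show N+1-(j+1)-(N+1-(j+1)) = 0 by omega, show j+j+1-(N+1) = 0 by omega,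
        Nat.sub_self, hY0, Matrix.zero_apply]
      push_cast
      ring_nf
      try simp only [Complex.I_sq, ite_self]
      try ring_nf
    · -- j=k, 2j>N
      simp only [if_pos (show j ≤ j by omega), if_neg (show ¬(j ≤ N+1-(j+1)) by omega),
        if_pos (show N+1-(j+1) ≤ j by omega),
        dif_neg (show ¬(1 ≤ j+j+1 ∧ j+j+1 ≤ N) by omega),
        dif_pos (show N+1 ≤ j+j+1 ∧ j+j+1 ≤ 2*N+1 by omega),
        show j-(N+1-(j+1)) = j+j-N by omega,
        show N+1-(j+1)-(N+1-(j+1)) = 0 by omega, show j+j+1-(N+1) = j+j-N by omega,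
        Nat.sub_self, hY0, Matrix.zero_apply]
      push_cast
      ring_nf
      try simp only [Complex.I_sq, ite_self]
      try ring_nf
  · rcases Nat.lt_trichotomy (j + k) N with hN | hN | hN
    · -- j>k, j+k<N
      simp only [if_neg (show ¬(j ≤ k) by omega), if_pos (show j ≤ N+1-(k+1) by omega),
        if_neg (show ¬(N+1-(j+1) ≤ k) by omega),
        if_pos (show N+1-(j+1) ≤ N+1-(k+1) by omega),
        dif_pos (show 1 ≤ j+k+1 ∧ j+k+1 ≤ N by omega),
        show N+1-(k+1)-j = N-(j+k) by omega, show N+1-(j+1)-k = N-(j+k) by omega,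
        show N+1-(k+1)-(N+1-(j+1)) = j-k by omega, show N+1-(j+k+1) = N-(j+k) by omega,
        Matrix.neg_apply]
      push_cast
      ring_nf
      try simp only [Complex.I_sq, ite_self]
      try ring_nf
    · -- j>k, j+k=N
      simp only [if_neg (show ¬(j ≤ k) by omega), if_pos (show j ≤ N+1-(k+1) by omega),
        if_pos (show N+1-(j+1) ≤ k by omega),
        if_pos (show N+1-(j+1) ≤ N+1-(k+1) by omega),
        dif_neg (show ¬(1 ≤ j+k+1 ∧ j+k+1 ≤ N) by omega),
        dif_pos (show N+1 ≤ j+k+1 ∧ j+k+1 ≤ 2*N+1 by omega),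
        show N+1-(k+1)-j = 0 by omega, show k-(N+1-(j+1)) = 0 by omega,
        show N+1-(k+1)-(N+1-(j+1)) = j-k by omega, show j+k+1-(N+1) = 0 by omega,
        hY0, Matrix.zero_apply]
      push_cast
      ring_nf
      try simp only [Complex.I_sq, ite_self]
      try ring_nf
    · -- j>k, j+k>N
      simp only [if_neg (show ¬(j ≤ k) by omega), if_neg (show ¬(j ≤ N+1-(k+1)) by omega),
        if_pos (show N+1-(j+1) ≤ k by omega),
        if_pos (show N+1-(j+1) ≤ N+1-(k+1) by omega),
        dif_neg (show ¬(1 ≤ j+k+1 ∧ j+k+1 ≤ N) by omega),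
        dif_pos (show N+1 ≤ j+k+1 ∧ j+k+1 ≤ 2*N+1 by omega),
        show j-(N+1-(k+1)) = j+k-N by omega, show k-(N+1-(j+1)) = j+k-N by omega,
        show N+1-(k+1)-(N+1-(j+1)) = j-k by omega, show j+k+1-(N+1) = j+k-N by omega]
      push_cast
      ring_nf
      try simp only [Complex.I_sq, ite_self]
      try ring_nf

lemma BB (N d : ℕ) : (1 + Complex.I • Jmat N d) * (1 - Complex.I • Jmat N d) = (2:ℂ) • 1 := by
  have hc : (Complex.I • Jmat N d) * (Complex.I • Jmat N d) = -1 := by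
    rw [smul_mul_assoc, mul_smul_comm, smul_smul, Complex.I_mul_I, Jmat_sq, neg_smul, one_smul]
  simp only [mul_sub, add_mul, one_mul, mul_one, hc, two_smul]
  abel

lemma quad (N d : ℕ) (A : Matrix (Fin (N+1) × Fin d) (Fin (N+1) × Fin d) ℂ) :
    (1 + Complex.I • Jmat N d) * ((1 - Complex.I • Jmat N d) * A * (1 + Complex.I • Jmat N d)) *
      (1 - Complex.I • Jmat N d) = (4:ℂ) • A := by
  calc (1 + Complex.I • Jmat N d) *
      ((1 - Complex.I • Jmat N d) * A * (1 + Complex.I • Jmat N d)) * (1 - Complex.I • Jmat N d)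
      = ((1 + Complex.I • Jmat N d) * (1 - Complex.I • Jmat N d)) * A *
        ((1 + Complex.I • Jmat N d) * (1 - Complex.I • Jmat N d)) := by
        simp only [Matrix.mul_assoc]
    _ = ((2:ℂ) • 1) * A * ((2:ℂ) • 1) := by rw [BB]
    _ = (4:ℂ) • A := by
        simp only [smul_mul_assoc, mul_smul_comm, smul_smul, one_mul, mul_one]
        norm_num

/-- `Toeplitz(X₀, X₁+iY₁, ..., X_N+iY_N) ⪰ 0` iff
`Toeplitz(X₀, ..., X_N) + Hankel(−Y_N, ..., −Y₁, 0, Y₁, ..., Y_N) ⪰ 0`. -/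
theorem complex_toeplitz_psd_iff_real (d N : ℕ)
    (X Y : ℕ → Matrix (Fin d) (Fin d) ℝ)
    (hX : ∀ n, (X n).IsSymm) (hY : ∀ n, (Y n).IsSymm) (hY0 : Y 0 = 0) :
    (blockToeplitz d N (fun n =>
        (X n).map (fun a => (a : ℂ)) + Complex.I • (Y n).map (fun a => (a : ℂ)))).PosSemidef ↔
      (blockToeplitz d N X + blockHankel d N (fun m =>
        if h : 1 ≤ m ∧ m ≤ N then -(Y (N + 1 - m))
        else if h2 : N + 1 ≤ m ∧ m ≤ 2 * N + 1 then Y (m - (N + 1))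
        else 0)).PosSemidef := by
  have hB : (1 + Complex.I • Jmat N d)ᴴ = 1 - Complex.I • Jmat N d := by
    rw [conjTranspose_add, conjTranspose_smul, Jmat_herm, conjTranspose_one]
    simp [Complex.conj_I, sub_eq_add_neg]
  have hkey := key d N X Y hX hY hY0
  constructor
  · intro hA
    have h1 := hA.conjTranspose_mul_mul_same (1 + Complex.I • Jmat N d)
    rw [hB, hkey] at h1
    rw [psd_smul_iff (by positivity)] at h1
    exact (psd_map_complex_iff _).mp h1
  · intro hM
    have h1 : ((2:ℂ) • ((blockToeplitz d N X + blockHankel d N (fun m =>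
        if h : 1 ≤ m ∧ m ≤ N then -(Y (N + 1 - m))
        else if h2 : N + 1 ≤ m ∧ m ≤ 2 * N + 1 then Y (m - (N + 1))
        else 0)).map (fun a => (a : ℂ)))).PosSemidef :=
      (psd_smul_iff (by positivity) _).mpr ((psd_map_complex_iff _).mpr hM)
    rw [← hkey] at h1
    have h2 := h1.mul_mul_conjTranspose_same (1 + Complex.I • Jmat N d)
    rw [hB] at h2
    rw [quad] at h2
    exact (psd_smul_iff (by positivity) _).mp h2
end

section
/- Let Z_ℝ = [[Re Z, Im Z], [−Im Z, Re Z]] with Re Z symmetric and Im Z skew-symmetric satisfying J(Re Z)J = Re Z and J(Im Z)+(Im Z)J = 0 for an orthogonal symmetric involution J. Then with Q = (1/√2)[[I, −J],[J, I]], one has Q Z_ℝ Qᵀ = [[Re Z + J Im Z, 0],[0, Re Z + J Im Z]]; consequently Z_ℝ ⪰ 0 if and only if Re Z + J Im Z ⪰ 0. -/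
open Matrix

/-- Auxiliary: a block-diagonal `fromBlocks A 0 0 A` is PSD if `A` is. -/
lemma psd_fromBlocks_diag {n : ℕ} {A : Matrix (Fin n) (Fin n) ℝ} (hA : A.PosSemidef) :
    (Matrix.fromBlocks A 0 0 A).PosSemidef := by
  have h1 : (Matrix.fromRows (1 : Matrix (Fin n) (Fin n) ℝ) (0 : Matrix (Fin n) (Fin n) ℝ) * A *
      (Matrix.fromRows (1 : Matrix (Fin n) (Fin n) ℝ) (0 : Matrix (Fin n) (Fin n) ℝ))ᴴ).PosSemidef :=
    hA.mul_mul_conjTranspose_same _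
  have h2 : (Matrix.fromRows (0 : Matrix (Fin n) (Fin n) ℝ) (1 : Matrix (Fin n) (Fin n) ℝ) * A *
      (Matrix.fromRows (0 : Matrix (Fin n) (Fin n) ℝ) (1 : Matrix (Fin n) (Fin n) ℝ))ᴴ).PosSemidef :=
    hA.mul_mul_conjTranspose_same _
  have e1 : Matrix.fromRows (1 : Matrix (Fin n) (Fin n) ℝ) (0 : Matrix (Fin n) (Fin n) ℝ) * A *
      (Matrix.fromRows (1 : Matrix (Fin n) (Fin n) ℝ) (0 : Matrix (Fin n) (Fin n) ℝ))ᴴ = Matrix.fromBlocks A 0 0 0 := by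
    rw [conjTranspose_eq_transpose_of_trivial, transpose_fromRows, fromRows_mul,
      fromRows_mul_fromCols]
    simp
  have e2 : Matrix.fromRows (0 : Matrix (Fin n) (Fin n) ℝ) (1 : Matrix (Fin n) (Fin n) ℝ) * A *
      (Matrix.fromRows (0 : Matrix (Fin n) (Fin n) ℝ) (1 : Matrix (Fin n) (Fin n) ℝ))ᴴ = Matrix.fromBlocks 0 0 0 A := by
    rw [conjTranspose_eq_transpose_of_trivial, transpose_fromRows, fromRows_mul,
      fromRows_mul_fromCols]
    simp
  rw [e1] at h1
  rw [e2] at h2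
  have := h1.add h2
  simpa [Matrix.fromBlocks_add] using this

/-- if `J` is an orthogonal symmetric involution, `R` is symmetric with
`JRJ = R`, and `S` is skew-symmetric with `JS = −SJ`, then with
`Q = (1/√2)[[I, −J],[J, I]]` and `Z_ℝ = [[R, S],[−S, R]]` one has
`Q Z_ℝ Qᵀ = [[R + JS, 0],[0, R + JS]]`; consequently `Z_ℝ ⪰ 0` iff `R + JS ⪰ 0`. -/
theorem rotate_block_matrix (n : ℕ) (J R S : Matrix (Fin n) (Fin n) ℝ)
    (hJsymm : Jᵀ = J) (hJinv : J * J = 1) (hR : Rᵀ = R) (hS : Sᵀ = -S)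
    (hJR : J * R * J = R) (hJS : J * S = -(S * J)) :
    ((1 / Real.sqrt 2) • Matrix.fromBlocks (1 : Matrix (Fin n) (Fin n) ℝ) (-J) J 1) *
        Matrix.fromBlocks R S (-S) R *
        ((1 / Real.sqrt 2) • Matrix.fromBlocks (1 : Matrix (Fin n) (Fin n) ℝ) (-J) J 1)ᵀ =
      Matrix.fromBlocks (R + J * S) 0 0 (R + J * S) ∧
    ((Matrix.fromBlocks R S (-S) R).PosSemidef ↔ (R + J * S).PosSemidef) := by
  set Q0 : Matrix (Fin n ⊕ Fin n) (Fin n ⊕ Fin n) ℝ := Matrix.fromBlocks 1 (-J) J 1 with hQ0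
  set Z : Matrix (Fin n ⊕ Fin n) (Fin n ⊕ Fin n) ℝ := Matrix.fromBlocks R S (-S) R with hZ
  set c : ℝ := 1 / Real.sqrt 2 with hc
  have hcc : c * c = 1 / 2 := by
    rw [hc, div_mul_div_comm, Real.mul_self_sqrt (by norm_num)]
    norm_num
  have hSJ : S * J = -(J * S) := by rw [hJS, neg_neg]
  have hJSJ : J * S * J = -S := by rw [hJS, neg_mul, mul_assoc, hJinv, mul_one]
  have hRJ : R * J = J * R := by
    calc R * J = (J * R * J) * J := by rw [hJR]
    _ = J * R * (J * J) := by rw [mul_assoc]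
    _ = J * R := by rw [hJinv, mul_one]
  have hQt : Q0ᵀ = Matrix.fromBlocks 1 J (-J) 1 := by
    simp [hQ0, fromBlocks_transpose, hJsymm]
  have key : Q0 * Z * Q0ᵀ = (2 : ℝ) • Matrix.fromBlocks (R + J * S) 0 0 (R + J * S) := by
    rw [hQt, hZ, hQ0, fromBlocks_multiply, fromBlocks_multiply, fromBlocks_smul]
    rw [fromBlocks_inj]
    refine ⟨?_, ?_, ?_, ?_⟩
    · simp only [one_mul, mul_one, neg_mul, mul_neg, neg_neg, add_mul, mul_add]
      rw [mul_assoc J R J, ← mul_assoc J R J, hJR, hSJ, smul_add]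
      module
    · simp only [one_mul, mul_one, neg_mul, mul_neg, neg_neg, add_mul, mul_add, smul_zero]
      rw [hJSJ, hRJ]; abel
    · simp only [one_mul, mul_one, neg_mul, mul_neg, neg_neg, add_mul, mul_add, smul_zero]
      rw [hJSJ, hRJ]; abel
    · simp only [one_mul, mul_one, neg_mul, mul_neg, neg_neg, add_mul, mul_add]
      rw [hJR, hSJ, smul_add]
      module
  have main : (c • Q0) * Z * (c • Q0)ᵀ = Matrix.fromBlocks (R + J * S) 0 0 (R + J * S) := by
    rw [Matrix.transpose_smul, Matrix.smul_mul, Matrix.mul_smul, Matrix.smul_mul, smul_smul,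
      key, smul_smul, hcc]
    norm_num
  have hQQ : (c • Q0) * (c • Q0)ᵀ = 1 := by
    have h2 : Q0 * Q0ᵀ = (2 : ℝ) • 1 := by
      rw [hQt, hQ0, fromBlocks_multiply, ← fromBlocks_one, fromBlocks_smul, fromBlocks_inj]
      refine ⟨?_, ?_, ?_, ?_⟩ <;> simp [hJinv, two_smul]
    rw [Matrix.transpose_smul, Matrix.smul_mul, Matrix.mul_smul, smul_smul, h2, smul_smul, hcc]
    norm_num
  have hQtQ : (c • Q0)ᵀ * (c • Q0) = 1 := by
    have h2 : Q0ᵀ * Q0 = (2 : ℝ) • 1 := by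
      rw [hQt, hQ0, fromBlocks_multiply, ← fromBlocks_one, fromBlocks_smul, fromBlocks_inj]
      refine ⟨?_, ?_, ?_, ?_⟩ <;> simp [hJinv, two_smul]
    rw [Matrix.transpose_smul, Matrix.smul_mul, Matrix.mul_smul, smul_smul, h2, smul_smul, hcc]
    norm_num
  refine ⟨main, ?_, ?_⟩
  · intro hZpsd
    have hD : (Matrix.fromBlocks (R + J * S) 0 0 (R + J * S)).PosSemidef := by
      rw [← main, ← conjTranspose_eq_transpose_of_trivial]
      exact hZpsd.mul_mul_conjTranspose_same _
    have hsub := hD.submatrix Sum.inl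
    have : (Matrix.fromBlocks (R + J * S) 0 0 (R + J * S)).submatrix Sum.inl Sum.inl
        = R + J * S := by
      ext i j
      simp
    rwa [this] at hsub
  · intro hA
    have hD : (Matrix.fromBlocks (R + J * S) 0 0 (R + J * S)).PosSemidef :=
      psd_fromBlocks_diag hA
    have hZeq : Z = (c • Q0)ᵀ * Matrix.fromBlocks (R + J * S) 0 0 (R + J * S) * (c • Q0) := by
      rw [← main]
      calc Z = ((c • Q0)ᵀ * (c • Q0)) * Z * ((c • Q0)ᵀ * (c • Q0)) := by
            rw [hQtQ, one_mul, mul_one]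
        _ = (c • Q0)ᵀ * ((c • Q0) * Z * (c • Q0)ᵀ) * (c • Q0) := by
            noncomm_ring
    rw [hZeq, ← conjTranspose_eq_transpose_of_trivial]
    exact hD.conjTranspose_mul_mul_same _
end
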